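/- arXiv:1912.00353 — 3 statements merged into one kernel-verified Lean document; each statement's English description precedes it below -/
import Mathlib

section
/- The q-Laguerre polynomials satisfy the contiguous relation (1+z)·L_n^{(δ)}(zq; q) = ((q^{n+1}-1)/q^{n+δ+1})·L_{n+1}^{(δ)}(z; q) + (1/q^{n+δ+1})·L_n^{(δ)}(z; q) for all z. -/
open MeasureTheory Finset

/-- Finite q-Pochhammer symbol `(a;q)_k = ∏_{j<k} (1 - a q^j)`. -/
noncomputable def qPoch (q a : ℝ) (k : ℕ) : ℝ := ∏ j ∈ Finset.range k, (1 - a * q ^ j)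

/-- Infinite q-Pochhammer symbol `(a;q)_∞ = ∏_{j≥0} (1 - a q^j)`. -/
noncomputable def qPochInf (q a : ℝ) : ℝ := ∏' k : ℕ, (1 - a * q ^ k)

/-- General basic hypergeometric series `ᵣφₛ` with numerator parameters `as`,
denominator parameters `bs`. -/
noncomputable def bhs (q : ℝ) (as bs : List ℝ) (z : ℝ) : ℝ :=
  ∑' k : ℕ,
    (as.map (fun a => qPoch q a k)).prod /
        (qPoch q q k * (bs.map (fun b => qPoch q b k)).prod) *
      ((-1 : ℝ) ^ k * q ^ (k * (k - 1) / 2)) ^ ((1 + (bs.length : ℤ)) - (as.length : ℤ)) *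
      z ^ k

/-- q-Laguerre polynomial `L_n^{(δ)}(z;q)` (terminating `₁φ₁` series). -/
noncomputable def qLaguerre (q δ : ℝ) (n : ℕ) (z : ℝ) : ℝ :=
  (qPoch q (q ^ (δ + 1)) n / qPoch q q n) *
    ∑ k ∈ Finset.range (n + 1),
      qPoch q (q ^ (-(n : ℝ))) k / (qPoch q q k * qPoch q (q ^ (δ + 1)) k) *
        ((-1 : ℝ) ^ k * q ^ (k * (k - 1) / 2)) * (-(q ^ ((n : ℝ) + δ + 1)) * z) ^ k

/-- Little q-Jacobi polynomial `p_n(z;a,b|q)` (terminating `₂φ₁` series). -/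
noncomputable def lqJacobi (q a b : ℝ) (n : ℕ) (z : ℝ) : ℝ :=
  ∑ k ∈ Finset.range (n + 1),
    qPoch q (q ^ (-(n : ℝ))) k * qPoch q (a * b * q ^ (n + 1)) k /
      (qPoch q q k * qPoch q (a * q) k) * (q * z) ^ k

/-- q-Meixner polynomial `M_n(x;b,c;q)` evaluated at `x = q^{-z}`. -/
noncomputable def qMeixner (q b c : ℝ) (n : ℕ) (x : ℝ) : ℝ :=
  ∑ k ∈ Finset.range (n + 1),
    qPoch q (q ^ (-(n : ℝ))) k * qPoch q x k / (qPoch q q k * qPoch q (b * q) k) *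
      (-(q ^ (n + 1)) / c) ^ k

/-- Al-Salam-Carlitz I polynomial `U_n^a(z;q)`. -/
noncomputable def alSalamCarlitzI (q a : ℝ) (n : ℕ) (z : ℝ) : ℝ :=
  (-a) ^ n * q ^ (n * (n - 1) / 2) *
    ∑ k ∈ Finset.range (n + 1),
      qPoch q (q ^ (-(n : ℝ))) k * qPoch q z⁻¹ k / (qPoch q q k * qPoch q 0 k) *
        (q * z / a) ^ k

/-- The `₂φ₂` polynomial `φ_n^{(k)}(z) = ₂φ₂(q^{-n}, q^{γ+k}; q^{δ+1}, q^{γ}; q, -q^{n+δ+1} z)`. -/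
noncomputable def phi2 (q δ γ : ℝ) (n k : ℕ) (z : ℝ) : ℝ :=
  ∑ j ∈ Finset.range (n + 1),
    qPoch q (q ^ (-(n : ℝ))) j * qPoch q (q ^ (γ + (k : ℝ))) j /
      (qPoch q q j * qPoch q (q ^ (δ + 1)) j * qPoch q (q ^ γ) j) *
      ((-1 : ℝ) ^ j * q ^ (j * (j - 1) / 2)) * (-(q ^ ((n : ℝ) + δ + 1)) * z) ^ j

/-- The `₃φ₂` polynomial `Φ_n^{(k)}(z) = ₃φ₂(q^{-n}, q^{γ+k}, abq^{n+1}; aq, q^{γ}; q, qz)`. -/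
noncomputable def Phi3 (q a b γ : ℝ) (n k : ℕ) (z : ℝ) : ℝ :=
  ∑ j ∈ Finset.range (n + 1),
    qPoch q (q ^ (-(n : ℝ))) j * qPoch q (q ^ (γ + (k : ℝ))) j *
        qPoch q (a * b * q ^ (n + 1)) j /
      (qPoch q q j * qPoch q (a * q) j * qPoch q (q ^ γ) j) * (q * z) ^ j

/-- The `₃φ₂` polynomial `φ_n^{(k)}` built on q-Meixner data, at `x = q^{-z}`:
`₃φ₂(q^{-n}, q^{γ+k}, q^{-z}; bq, q^{γ}; q, -q^{n+1}/c)`. -/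
noncomputable def phi3M (q b c γ : ℝ) (n k : ℕ) (x : ℝ) : ℝ :=
  ∑ j ∈ Finset.range (n + 1),
    qPoch q (q ^ (-(n : ℝ))) j * qPoch q (q ^ (γ + (k : ℝ))) j * qPoch q x j /
      (qPoch q q j * qPoch q (b * q) j * qPoch q (q ^ γ) j) * (-(q ^ (n + 1)) / c) ^ j

/-- The `₃φ₂` polynomial `ϕ_n^{(k)}(z) = ₃φ₂(q^{-n}, q^{γ+k}, z^{-1}; 0, q^{γ}; q, qz/a)`. -/
noncomputable def phi3AS (q a γ : ℝ) (n k : ℕ) (z : ℝ) : ℝ :=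
  ∑ j ∈ Finset.range (n + 1),
    qPoch q (q ^ (-(n : ℝ))) j * qPoch q (q ^ (γ + (k : ℝ))) j * qPoch q z⁻¹ j /
      (qPoch q q j * qPoch q 0 j * qPoch q (q ^ γ) j) * (q * z / a) ^ j

private lemma qL_tri (j : ℕ) : (j+1)*((j+1)-1)/2 = j*(j-1)/2 + j := by
  cases j with
  | zero => rfl
  | succ i =>
    show (i+2)*(i+1)/2 = (i+1)*i/2 + (i+1)
    rw [show (i+2)*(i+1) = (i+1)*i + 2*(i+1) by ring, Nat.add_mul_div_left _ _ (by norm_num)]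

private lemma qPoch_pos' (q x : ℝ) (hq0 : 0 < q) (hq1 : q < 1) (hx0 : 0 ≤ x) (hx1 : x < 1)
    (k : ℕ) : 0 < qPoch q x k := by
  apply Finset.prod_pos
  intro j _
  nlinarith [pow_le_one₀ hq0.le hq1.le (n := j), pow_pos hq0 j]

/-- Coefficient of `z^k` in the simplified q-Laguerre sum, with `t = q^(δ+1)`. -/
noncomputable def qLC (q t : ℝ) (m k : ℕ) : ℝ :=
  qPoch q t m / qPoch q q m *
    (qPoch q ((q : ℝ) ^ m)⁻¹ k / (qPoch q q k * qPoch q t k) * q ^ (k * (k - 1) / 2) *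
      (q ^ m * t) ^ k)

private lemma qLC_top (q t : ℝ) (hq : q ≠ 0) (n : ℕ) : qLC q t n (n+1) = 0 := by
  have h : qPoch q ((q : ℝ) ^ n)⁻¹ (n+1) = 0 := by
    apply Finset.prod_eq_zero (Finset.self_mem_range_succ n)
    rw [inv_mul_cancel₀ (pow_ne_zero n hq)]; ring
  simp [qLC, h]

private lemma qLC_step (q t : ℝ) (hq0 : 0 < q) (hq1 : q < 1) (ht0 : 0 < t) (ht1 : t < 1)
    (n j : ℕ) :
    (q ^ (n+1) - 1) / (q ^ n * t) * qLC q t (n+1) (j+1) + 1 / (q ^ n * t) * qLC q t n (j+1) =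
      qLC q t n (j+1) * q ^ (j+1) + qLC q t n j * q ^ j := by
  have hQn := (qPoch_pos' q q hq0 hq1 hq0.le hq1 n).ne'
  have hQj := (qPoch_pos' q q hq0 hq1 hq0.le hq1 j).ne'
  have hTj := (qPoch_pos' q t hq0 hq1 ht0.le ht1 j).ne'
  have hfac : ∀ (x : ℝ), 0 ≤ x → x < 1 → ∀ i : ℕ, (1 - x * q ^ i) ≠ 0 := by
    intro x hx0 hx1 i
    nlinarith [pow_le_one₀ hq0.le hq1.le (n := i), pow_pos hq0 i]
  have hqs := hfac q hq0.le hq1 j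
  have hts := hfac t ht0.le ht1 j
  have hqn := hfac q hq0.le hq1 n
  have e1 : qPoch q ((q : ℝ) ^ n)⁻¹ (j+1)
      = qPoch q ((q : ℝ) ^ n)⁻¹ j * (1 - ((q : ℝ) ^ n)⁻¹ * q ^ j) := Finset.prod_range_succ _ _
  have e2 : qPoch q q (j+1) = qPoch q q j * (1 - q * q ^ j) := Finset.prod_range_succ _ _
  have e3 : qPoch q t (j+1) = qPoch q t j * (1 - t * q ^ j) := Finset.prod_range_succ _ _
  have e4 : qPoch q ((q : ℝ) ^ (n+1))⁻¹ (j+1)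
      = qPoch q ((q : ℝ) ^ n)⁻¹ j * (1 - ((q : ℝ) ^ (n+1))⁻¹) := by
    unfold qPoch
    rw [Finset.prod_range_succ']
    congr 1
    · refine Finset.prod_congr rfl fun i _ => ?_
      have : ((q : ℝ) ^ (n+1))⁻¹ * q ^ (i+1) = ((q : ℝ) ^ n)⁻¹ * q ^ i := by
        rw [pow_succ, pow_succ]
        field_simp
      rw [this]
    · rw [pow_zero, mul_one]
  have e5 : qPoch q t (n+1) = qPoch q t n * (1 - t * q ^ n) := Finset.prod_range_succ _ _
  have e6 : qPoch q q (n+1) = qPoch q q n * (1 - q * q ^ n) := Finset.prod_range_succ _ _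
  have e7 : (q:ℝ) ^ ((j+1) * ((j+1)-1) / 2) = q ^ (j*(j-1)/2) * q ^ j := by
    rw [qL_tri, pow_add]
  unfold qLC
  rw [e1, e2, e3, e4, e5, e6, e7, pow_succ q n]
  rw [show ((q:ℝ)^n*q*t)^(j+1) = ((q^n*t)^j)*((q^n*t))*(q^j*q) by ring,
    show ((q:ℝ)^n*t)^(j+1) = ((q^n*t)^j)*(q^n*t) from pow_succ _ _,
    show (q:ℝ)^(j+1) = q^j*q from pow_succ _ _]
  set s := (q:ℝ)^j with hs
  set v := (q:ℝ)^n with hv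
  set E := (q:ℝ)^(j*(j-1)/2) with hE
  set A := (v*t)^j with hA
  set P := qPoch q v⁻¹ j with hP
  set Qn := qPoch q q n with hQn'
  set Qj := qPoch q q j with hQj'
  set Tj := qPoch q t j with hTj'
  set Tn := qPoch q t n with hTn'
  have hv0 : v ≠ 0 := pow_ne_zero n hq0.ne'
  have hs0 : s ≠ 0 := pow_ne_zero j hq0.ne'
  have hqn' : 1 - v * q ≠ 0 := by rw [mul_comm]; exact hqn
  field_simp
  ring

private lemma qLC_zero (q t : ℝ) (hq0 : 0 < q) (hq1 : q < 1) (ht0 : 0 < t) (ht1 : t < 1)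
    (n : ℕ) :
    (q ^ (n+1) - 1) / (q ^ n * t) * qLC q t (n+1) 0 + 1 / (q ^ n * t) * qLC q t n 0 =
      qLC q t n 0 := by
  have hQn := (qPoch_pos' q q hq0 hq1 hq0.le hq1 n).ne'
  have hqn : (1 - q * q ^ n) ≠ 0 := by
    nlinarith [pow_le_one₀ hq0.le hq1.le (n := n), pow_pos hq0 n]
  have e5 : qPoch q t (n+1) = qPoch q t n * (1 - t * q ^ n) := Finset.prod_range_succ _ _
  have e6 : qPoch q q (n+1) = qPoch q q n * (1 - q * q ^ n) := Finset.prod_range_succ _ _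
  have h0 : ∀ x : ℝ, qPoch q x 0 = 1 := fun x => Finset.prod_range_zero _
  unfold qLC
  rw [e5, e6, h0, h0, h0, h0]
  have hqn' : 1 - q ^ n * q ≠ 0 := by rw [mul_comm]; exact hqn
  field_simp
  ring

private lemma qLC_rec (q t : ℝ) (hq0 : 0 < q) (hq1 : q < 1) (ht0 : 0 < t) (ht1 : t < 1)
    (n : ℕ) (z : ℝ) :
    (1 + z) * ∑ k ∈ Finset.range (n+1), qLC q t n k * (z*q)^k =
      (q ^ (n+1) - 1) / (q ^ n * t) * ∑ k ∈ Finset.range (n+1+1), qLC q t (n+1) k * z^k +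
        1 / (q ^ n * t) * ∑ k ∈ Finset.range (n+1), qLC q t n k * z^k := by
  have htop : qLC q t n (n+1) = 0 := qLC_top q t hq0.ne' n
  rw [show (∑ k ∈ Finset.range (n+1), qLC q t n k * (z*q)^k)
      = ∑ k ∈ Finset.range (n+1), qLC q t n k * q^k * z^k from
    Finset.sum_congr rfl fun k _ => by rw [mul_pow]; ring]
  have key : (q ^ (n+1) - 1) / (q ^ n * t) * ∑ k ∈ Finset.range (n+1+1), qLC q t (n+1) k * z^k +
        1 / (q ^ n * t) * ∑ k ∈ Finset.range (n+1), qLC q t n k * z^k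
      = ∑ k ∈ Finset.range (n+1+1),
          ((q ^ (n+1) - 1) / (q ^ n * t) * qLC q t (n+1) k + 1 / (q ^ n * t) * qLC q t n k)
            * z^k := by
    rw [show (∑ k ∈ Finset.range (n+1), qLC q t n k * z^k)
        = ∑ k ∈ Finset.range (n+1+1), qLC q t n k * z^k by
      rw [Finset.sum_range_succ _ (n+1), htop, zero_mul, add_zero]]
    rw [Finset.mul_sum, Finset.mul_sum, ← Finset.sum_add_distrib]
    exact Finset.sum_congr rfl fun k _ => by ring
  rw [key, Finset.sum_range_succ' _ (n+1)]
  have hstep : ∀ i : ℕ,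
      ((q ^ (n+1) - 1) / (q ^ n * t) * qLC q t (n+1) (i+1) + 1 / (q ^ n * t) * qLC q t n (i+1))
          * z^(i+1)
        = qLC q t n (i+1) * q^(i+1) * z^(i+1) + (qLC q t n i * q^i * z^i) * z := by
    intro i
    rw [qLC_step q t hq0 hq1 ht0 ht1 n i]
    ring
  rw [Finset.sum_congr rfl (fun i _ => hstep i), Finset.sum_add_distrib]
  have hz0 : ((q ^ (n+1) - 1) / (q ^ n * t) * qLC q t (n+1) 0 + 1 / (q ^ n * t) * qLC q t n 0)
      * z^0 = qLC q t n 0 := by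
    rw [pow_zero, mul_one, qLC_zero q t hq0 hq1 ht0 ht1 n]
  rw [hz0, ← Finset.sum_mul]
  have hback : (∑ i ∈ Finset.range (n+1), qLC q t n (i+1) * q^(i+1) * z^(i+1)) + qLC q t n 0
      = ∑ k ∈ Finset.range (n+1), qLC q t n k * q^k * z^k := by
    have h := Finset.sum_range_succ' (fun k => qLC q t n k * q^k * z^k) (n+1)
    rw [Finset.sum_range_succ _ (n+1), htop] at h
    simpa using h.symm
  linarith [hback]

private lemma qLaguerre_eq_sum (q δ : ℝ) (hq0 : 0 < q) (n : ℕ) (z : ℝ) :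
    qLaguerre q δ n z =
      ∑ k ∈ Finset.range (n+1), qLC q (q ^ (δ + 1)) n k * z^k := by
  unfold qLaguerre qLC
  rw [Finset.mul_sum]
  refine Finset.sum_congr rfl fun k _ => ?_
  have h1 : q ^ (-(n:ℝ)) = ((q:ℝ)^n)⁻¹ := by
    rw [Real.rpow_neg hq0.le, Real.rpow_natCast]
  have h2 : q ^ ((n:ℝ)+δ+1) = q^n * q^(δ+1) := by
    rw [show (n:ℝ)+δ+1 = (n:ℝ)+(δ+1) by ring, Real.rpow_add hq0, Real.rpow_natCast]
  have h3 : (-(q ^ ((n:ℝ)+δ+1)) * z)^k = (-1:ℝ)^k * (((q:ℝ)^n * q^(δ+1)) * z)^k := by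
    rw [h2, show -((q:ℝ)^n * q^(δ+1)) * z = -1 * (((q:ℝ)^n*q^(δ+1))*z) by ring, mul_pow]
  have h4 : ((-1:ℝ))^k * (-1:ℝ)^k = 1 := by rw [← mul_pow]; norm_num
  have h5 : ∀ a b c : ℝ, a * ((-1:ℝ)^k * b) * ((-1:ℝ)^k * c) = a * b * c := by
    intro a b c
    calc a * ((-1:ℝ)^k * b) * ((-1:ℝ)^k * c) = a*b*c*((-1:ℝ)^k*(-1:ℝ)^k) := by ring
    _ = a*b*c := by rw [h4, mul_one]
  rw [h1, h3, h5]
  rw [mul_pow ((q:ℝ)^n * q^(δ+1)) z k]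
  ring

/-- `(1+z) L_n^{(δ)}(zq;q) = ((q^{n+1}-1)/q^{n+δ+1}) L_{n+1}^{(δ)}(z;q)
+ (1/q^{n+δ+1}) L_n^{(δ)}(z;q)`. -/
theorem stmt2 (q δ : ℝ) (hq0 : 0 < q) (hq1 : q < 1) (hδ : -1 < δ) (n : ℕ) (z : ℝ) :
    (1 + z) * qLaguerre q δ n (z * q) =
      (q ^ ((n : ℝ) + 1) - 1) / q ^ ((n : ℝ) + δ + 1) * qLaguerre q δ (n + 1) z +
        1 / q ^ ((n : ℝ) + δ + 1) * qLaguerre q δ n z := by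
  have ht0 : (0:ℝ) < q ^ (δ+1) := Real.rpow_pos_of_pos hq0 _
  have ht1 : q ^ (δ+1) < 1 := Real.rpow_lt_one hq0.le hq1 (by linarith)
  rw [qLaguerre_eq_sum q δ hq0 n (z*q), qLaguerre_eq_sum q δ hq0 (n+1) z,
    qLaguerre_eq_sum q δ hq0 n z]
  have h2 : q ^ ((n:ℝ)+δ+1) = (q:ℝ)^n * q^(δ+1) := by
    rw [show (n:ℝ)+δ+1 = (n:ℝ)+(δ+1) by ring, Real.rpow_add hq0, Real.rpow_natCast]
  have h3 : q ^ ((n:ℝ)+1) = (q:ℝ)^(n+1) := by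
    rw [show (n:ℝ)+1 = ((n+1:ℕ):ℝ) by push_cast; ring, Real.rpow_natCast]
  rw [h2, h3]
  exact qLC_rec q (q ^ (δ+1)) hq0 hq1 ht0 ht1 n z
end

section
/- The little q-Jacobi polynomials satisfy the contiguous relation (1 - zqb)·p_n(z; a, bq | q) = (bq^{n+1}(aq^{n+1}-1)/(abq^{2n+2}-1))·p_{n+1}(z; a, b | q) + ((bq^{n+1}-1)/(abq^{2n+2}-1))·p_n(z; a, b | q) for all z. -/
open MeasureTheory Finset

lemma qPoch_zero (q x : ℝ) : qPoch q x 0 = 1 := Finset.prod_range_zero _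

lemma qPoch_succ (q x : ℝ) (k : ℕ) : qPoch q x (k+1) = qPoch q x k * (1 - x * q ^ k) :=
  Finset.prod_range_succ _ _

lemma qPoch_succ' (q x : ℝ) (k : ℕ) : qPoch q x (k+1) = (1 - x) * qPoch q (x*q) k := by
  rw [qPoch, Finset.prod_range_succ']
  simp only [pow_zero, mul_one]
  rw [mul_comm]
  congr 1
  apply Finset.prod_congr rfl
  intro j _
  ring

lemma qPoch_pos_q (q : ℝ) (hq0 : 0 < q) (hq1 : q < 1) (k : ℕ) : 0 < qPoch q q k := by
  apply Finset.prod_pos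
  intro j _
  have : q * q ^ j < 1 := by
    have := pow_lt_one₀ hq0.le hq1 (n := j+1) (by omega)
    rwa [pow_succ, mul_comm] at this
  linarith

lemma qPoch_pos_aq (q c : ℝ) (hq0 : 0 < q) (hq1 : q < 1) (hc0 : 0 < c) (hc1 : c < 1)
    (k : ℕ) : 0 < qPoch q c k := by
  apply Finset.prod_pos
  intro j _
  have h1 : q ^ j ≤ 1 := pow_le_one₀ hq0.le hq1.le
  have h2 : c * q ^ j ≤ c * 1 := by nlinarith [pow_pos hq0 j]
  linarith

/-- contiguous relation for little q-Jacobi polynomials: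
`(1 - zqb) p_n(z;a,bq|q) = (bq^{n+1}(aq^{n+1}-1)/(abq^{2n+2}-1)) p_{n+1}(z;a,b|q)
+ ((bq^{n+1}-1)/(abq^{2n+2}-1)) p_n(z;a,b|q)`. -/
theorem stmt5 (q a b : ℝ) (hq0 : 0 < q) (hq1 : q < 1) (ha0 : 0 < a * q) (ha1 : a * q < 1)
    (hb : b * q < 1) (n : ℕ) (h : a * b * q ^ (2 * n + 2) ≠ 1) (z : ℝ) :
    (1 - z * q * b) * lqJacobi q a (b * q) n z =
      b * q ^ (n + 1) * (a * q ^ (n + 1) - 1) / (a * b * q ^ (2 * n + 2) - 1) *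
          lqJacobi q a b (n + 1) z +
        (b * q ^ (n + 1) - 1) / (a * b * q ^ (2 * n + 2) - 1) * lqJacobi q a b n z := by
  have hqne : q ≠ 0 := ne_of_gt hq0
  have hD : a * b * q ^ (2 * n + 2) - 1 ≠ 0 := sub_ne_zero.mpr h
  have hrp : ∀ m : ℕ, q ^ (-(m:ℝ)) = (q ^ m)⁻¹ := fun m => by
    rw [Real.rpow_neg hq0.le, Real.rpow_natCast]
  have hq3 : ∀ k, qPoch q q k ≠ 0 := fun k => ne_of_gt (qPoch_pos_q q hq0 hq1 k)
  have hq4 : ∀ k, qPoch q (a*q) k ≠ 0 := fun k =>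
    ne_of_gt (qPoch_pos_aq q (a*q) hq0 hq1 ha0 ha1 k)
  have hf1 : ∀ m : ℕ, (1 : ℝ) - q * q ^ m ≠ 0 := by
    intro m
    have : q * q ^ m < 1 := by
      have := pow_lt_one₀ hq0.le hq1 (n := m+1) (by omega)
      rwa [pow_succ, mul_comm] at this
    intro hc; apply absurd hc; intro hc'; linarith
  have hf2 : ∀ m : ℕ, (1 : ℝ) - a * q * q ^ m ≠ 0 := by
    intro m
    have h1 : q ^ m ≤ 1 := pow_le_one₀ hq0.le hq1.le
    have h2 : a * q * q ^ m ≤ a * q * 1 := by nlinarith [pow_pos hq0 m]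
    intro hc; apply absurd hc; intro hc'; linarith
  -- F1, F2, F3
  set F1 : ℕ → ℝ := fun k => qPoch q (q ^ (-(n:ℝ))) k * qPoch q (a*b*q^(n+2)) k /
      (qPoch q q k * qPoch q (a*q) k) * (q*z)^k with hF1
  set F2 : ℕ → ℝ := fun k => qPoch q (q ^ (-((n+1:ℕ):ℝ))) k * qPoch q (a*b*q^(n+2)) k /
      (qPoch q q k * qPoch q (a*q) k) * (q*z)^k with hF2
  set F3 : ℕ → ℝ := fun k => qPoch q (q ^ (-(n:ℝ))) k * qPoch q (a*b*q^(n+1)) k /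
      (qPoch q q k * qPoch q (a*q) k) * (q*z)^k with hF3
  have h0 : qPoch q (q ^ (-(n:ℝ))) (n+1) = 0 := by
    apply Finset.prod_eq_zero (Finset.self_mem_range_succ n)
    rw [hrp]
    field_simp
    norm_num
  have E1 : lqJacobi q a (b*q) n z = ∑ k ∈ range (n+1), F1 k := by
    unfold lqJacobi
    apply Finset.sum_congr rfl
    intro k _
    rw [hF1, show a*(b*q)*q^(n+1) = a*b*q^(n+2) by ring]
  have E2 : lqJacobi q a b (n+1) z = ∑ k ∈ range (n+2), F2 k := rfl
  have E3 : lqJacobi q a b n z = ∑ k ∈ range (n+1), F3 k := rfl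
  have Z1 : F1 (n+1) = 0 := by simp only [hF1, h0, zero_mul, zero_div]
  have Z3 : F3 (n+1) = 0 := by simp only [hF3, h0, zero_mul, zero_div]
  set c1 : ℝ := b * q ^ (n + 1) * (a * q ^ (n + 1) - 1) / (a * b * q ^ (2 * n + 2) - 1)
    with hc1
  set c2 : ℝ := (b * q ^ (n + 1) - 1) / (a * b * q ^ (2 * n + 2) - 1) with hc2
  have main : ∑ k ∈ range (n+2), (F1 k - c1 * F2 k - c2 * F3 k)
      = ∑ k ∈ range (n+1), (z*q*b * F1 k) := by
    rw [Finset.sum_range_succ']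
    have h00 : F1 0 - c1 * F2 0 - c2 * F3 0 = 0 := by
      simp only [hF1, hF2, hF3, hc1, hc2, qPoch_zero, pow_zero]
      simp only [mul_one, div_one]
      rw [sub_sub, ← add_div, sub_eq_zero, eq_comm, div_eq_one_iff_eq hD]
      ring
    rw [h00, add_zero]
    apply Finset.sum_congr rfl
    intro m hm
    have hmn : m ≤ n := by simpa using Nat.lt_succ_iff.mp (Finset.mem_range.mp hm)
    -- rewrite the three shifted Pochhammers
    have hp3 : qPoch q q m ≠ 0 := hq3 m
    have hp4 : qPoch q (a*q) m ≠ 0 := hq4 m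
    have hqn : (q:ℝ)^n ≠ 0 := pow_ne_zero _ hqne
    have hqn1 : (q:ℝ)^(n+1) ≠ 0 := pow_ne_zero _ hqne
    have hfm1 : (1:ℝ) - q * q^m ≠ 0 := hf1 m
    have hfm2 : (1:ℝ) - a * q * q^m ≠ 0 := hf2 m
    have r2 : qPoch q (q ^ (-((n+1:ℕ):ℝ))) (m+1)
        = (1 - (q^(n+1))⁻¹) * qPoch q (q ^ (-(n:ℝ))) m := by
      rw [qPoch_succ', hrp, hrp]
      congr 2
      rw [pow_succ]
      field_simp
    have r3 : qPoch q (a*b*q^(n+1)) (m+1)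
        = (1 - a*b*q^(n+1)) * qPoch q (a*b*q^(n+2)) m := by
      rw [qPoch_succ', show a*b*q^(n+1)*q = a*b*q^(n+2) by ring]
    simp only [hF1, hF2, hF3, hc1, hc2]
    rw [r2, r3, qPoch_succ q (q ^ (-(n:ℝ))) m, qPoch_succ q (a*b*q^(n+2)) m,
      qPoch_succ q q m, qPoch_succ q (a*q) m, hrp n, pow_succ (q*z) m]
    field_simp [hp3, hp4, hqn, hqn1, hfm1, hfm2, hD]
    rw [div_eq_iff (mul_ne_zero (by convert hfm1 using 2; ring) (by convert hfm2 using 2; ring))]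
    ring
  -- assemble
  rw [E1, E2, E3]
  rw [Finset.sum_sub_distrib, Finset.sum_sub_distrib, ← Finset.mul_sum, ← Finset.mul_sum,
    ← Finset.mul_sum] at main
  have hS1 : ∑ k ∈ range (n+2), F1 k = ∑ k ∈ range (n+1), F1 k := by
    rw [Finset.sum_range_succ, Z1, add_zero]
  have hS3 : ∑ k ∈ range (n+2), F3 k = ∑ k ∈ range (n+1), F3 k := by
    rw [Finset.sum_range_succ, Z3, add_zero]
  rw [hS1, hS3] at main
  linarith [main]
end

section
/- The little q-Jacobi polynomials satisfy p_n(z; a, b | q) = ((1-abq^{n+1})/(1-abq^{2n+1}))·p_n(z; a, bq | q) + (abq^{n+1}(1-q^n)/(1-abq^{2n+1}))·p_{n-1}(z; a, bq | q) for all z and n ≥ 1. -/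
open MeasureTheory Finset

lemma qPoch_shift (q x : ℝ) (k : ℕ) :
    qPoch q x k * (1 - x * q ^ k) = (1 - x) * qPoch q (x * q) k := by
  calc qPoch q x k * (1 - x * q ^ k)
      = ∏ j ∈ Finset.range (k + 1), (1 - x * q ^ j) := (Finset.prod_range_succ _ _).symm
    _ = (∏ j ∈ Finset.range k, (1 - x * q ^ (j + 1))) * (1 - x * q ^ 0) :=
        Finset.prod_range_succ' _ _
    _ = (1 - x) * qPoch q (x * q) k := by
        rw [mul_comm]
        unfold qPoch
        congr 1
        · simp
        · exact Finset.prod_congr rfl fun j _ => by ring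

lemma qPoch_ne_zero (q x : ℝ) (hq0 : 0 < q) (hq1 : q < 1) (hx : 0 ≤ x) (hx1 : x < 1) (k : ℕ) :
    qPoch q x k ≠ 0 := by
  unfold qPoch
  apply ne_of_gt
  apply Finset.prod_pos
  intro j _
  have hqj : q ^ j ≤ 1 := pow_le_one₀ hq0.le hq1.le
  nlinarith [pow_pos hq0 j]

/-- `p_n(z;a,b|q) = ((1-abq^{n+1})/(1-abq^{2n+1})) p_n(z;a,bq|q)
+ (abq^{n+1}(1-q^n)/(1-abq^{2n+1})) p_{n-1}(z;a,bq|q)` for `n ≥ 1`. -/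
theorem stmt6 (q a b : ℝ) (hq0 : 0 < q) (hq1 : q < 1) (ha0 : 0 < a * q) (ha1 : a * q < 1)
    (hb : b * q < 1) (n : ℕ) (hn : 1 ≤ n) (h : a * b * q ^ (2 * n + 1) ≠ 1) (z : ℝ) :
    lqJacobi q a b n z =
      (1 - a * b * q ^ (n + 1)) / (1 - a * b * q ^ (2 * n + 1)) * lqJacobi q a (b * q) n z +
        a * b * q ^ (n + 1) * (1 - q ^ n) / (1 - a * b * q ^ (2 * n + 1)) *
          lqJacobi q a (b * q) (n - 1) z := by
  have hm : ∀ m : ℕ, q ^ (-(m : ℝ)) * q ^ m = 1 := by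
    intro m
    rw [← Real.rpow_natCast q m, ← Real.rpow_add hq0]
    norm_num
  have hn' : n - 1 + 1 = n := Nat.succ_pred_eq_of_pos hn
  have hD : (1 : ℝ) - a * b * q ^ (2 * n + 1) ≠ 0 := sub_ne_zero.mpr (Ne.symm h)
  have hcast : ((n - 1 : ℕ) : ℝ) = (n : ℝ) - 1 := by
    rw [Nat.cast_sub hn]; simp
  have hshift : q ^ (-(n : ℝ)) * q = q ^ (-((n - 1 : ℕ) : ℝ)) := by
    rw [hcast, show -((n : ℝ) - 1) = -(n : ℝ) + 1 by ring, Real.rpow_add hq0, Real.rpow_one]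
  unfold lqJacobi
  rw [hn']
  have hzero : qPoch q (q ^ (-((n - 1 : ℕ) : ℝ))) n = 0 := by
    unfold qPoch
    refine Finset.prod_eq_zero (i := n - 1) (Finset.mem_range.mpr (by omega)) ?_
    rw [sub_eq_zero]
    exact (hm (n - 1)).symm
  rw [show (∑ k ∈ Finset.range n,
        qPoch q (q ^ (-((n - 1 : ℕ) : ℝ))) k * qPoch q (a * (b * q) * q ^ n) k /
          (qPoch q q k * qPoch q (a * q) k) * (q * z) ^ k)
      = ∑ k ∈ Finset.range (n + 1),
        qPoch q (q ^ (-((n - 1 : ℕ) : ℝ))) k * qPoch q (a * (b * q) * q ^ n) k /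
          (qPoch q q k * qPoch q (a * q) k) * (q * z) ^ k from by
    rw [Finset.sum_range_succ, hzero]; simp]
  rw [Finset.mul_sum, Finset.mul_sum, ← Finset.sum_add_distrib]
  refine Finset.sum_congr rfl fun k _ => ?_
  -- termwise identity
  have harg1 : a * (b * q) * q ^ (n + 1) = a * b * q ^ (n + 1) * q := by ring
  have harg2 : a * (b * q) * q ^ n = a * b * q ^ (n + 1) := by
    rw [pow_succ]; ring
  rw [harg1, harg2]
  set u : ℝ := q ^ (-(n : ℝ)) with hu
  set c : ℝ := a * b * q ^ (n + 1) with hc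
  set P := qPoch q u k
  set P' := qPoch q (q ^ (-((n - 1 : ℕ) : ℝ))) k
  set Q := qPoch q c k
  set Q' := qPoch q (c * q) k
  have hPrel : P * (1 - u * q ^ k) = (1 - u) * P' := by
    have := qPoch_shift q u k
    rw [hu, hshift] at this
    exact this
  have hQrel : Q * (1 - c * q ^ k) = (1 - c) * Q' := qPoch_shift q c k
  have h2n : a * b * q ^ (2 * n + 1) = c * q ^ n := by
    rw [hc, show 2 * n + 1 = (n + 1) + n from by ring, pow_add]; ring
  rw [h2n] at hD ⊢
  have hnum : (1 - c * q ^ n) * (P * Q) = (1 - c) * (P * Q') + (c * (1 - q ^ n)) * (P' * Q) := by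
    linear_combination P * hQrel - c * q ^ n * Q * hPrel + (c * P' * Q - c * q ^ k * P * Q) * hm n
  have hR : qPoch q q k ≠ 0 := qPoch_ne_zero q q hq0 hq1 hq0.le hq1 k
  have hS : qPoch q (a * q) k ≠ 0 := qPoch_ne_zero q (a * q) hq0 hq1 ha0.le ha1 k
  field_simp
  linear_combination (q * z) ^ k * hnum
end
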